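/- arXiv:1111.1294 — 5 statements merged into one kernel-verified Lean document; each statement's English description precedes it below -/
import Mathlib

section
/- Let ω ∈ Ap(S) and let ω = Σ_{i=2}^ν λ_i g_i be a maximal representation of ω. Then λ_i ≤ β_i for each i = 2, …, ν. -/
open Finset

/-- `S` is a numerical semigroup: a submonoid of `(ℕ, +)` with finite complement. -/
def IsNumSgp (S : Set ℕ) : Prop :=
  0 ∈ S ∧ (∀ a ∈ S, ∀ b ∈ S, a + b ∈ S) ∧ (Sᶜ : Set ℕ).Finite

/-- `s` belongs to the Apéry set of `S` with respect to `m`: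
`s ∈ S` and `s - m ∉ S` (i.e. no `u ∈ S` with `u + m = s`). -/
def InApery (S : Set ℕ) (m s : ℕ) : Prop :=
  s ∈ S ∧ ∀ u ∈ S, u + m ≠ s

def AperySet (S : Set ℕ) (m : ℕ) : Set ℕ := {s | InApery S m s}

/-- `ordS S s` is the largest `h` such that `s` is a sum of `h` nonzero elements of `S`. -/
noncomputable def ordS (S : Set ℕ) (s : ℕ) : ℕ :=
  sSup {h : ℕ | ∃ f : Fin h → ℕ, (∀ j, f j ∈ S ∧ f j ≠ 0) ∧ ∑ j, f j = s}

/-- `g` generates `S`. -/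
def Generates (S : Set ℕ) {ν : ℕ} (g : Fin ν → ℕ) : Prop :=
  ∀ s, s ∈ S ↔ ∃ lam : Fin ν → ℕ, ∑ i, lam i * g i = s

/-- `g` is a minimal generating system of `S`: it generates `S`
and no `g i` is generated by the remaining generators. -/
def MinimalGen (S : Set ℕ) {ν : ℕ} (g : Fin ν → ℕ) : Prop :=
  Generates S g ∧ ∀ i, ¬ ∃ lam : Fin ν → ℕ, lam i = 0 ∧ ∑ j, lam j * g j = g i

/-- `lam` is a maximal representation of `s`: the coefficient sum equals `ordS S s`. -/
def IsMaxRep (S : Set ℕ) {ν : ℕ} (g : Fin ν → ℕ) (lam : Fin ν → ℕ) (s : ℕ) : Prop :=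
  ∑ i, lam i * g i = s ∧ ∑ i, lam i = ordS S s

/-- `s` has a unique maximal representation. -/
def UniqueMaxRep (S : Set ℕ) {ν : ℕ} (g : Fin ν → ℕ) (s : ℕ) : Prop :=
  ∃! lam : Fin ν → ℕ, IsMaxRep S g lam s

/-- `β_i = max {h | h g_i ∈ Ap(S) and ord(h g_i) = h}`. -/
noncomputable def betaN (S : Set ℕ) (m : ℕ) {ν : ℕ} (g : Fin ν → ℕ) (i : Fin ν) : ℕ :=
  sSup {h : ℕ | InApery S m (h * g i) ∧ ordS S (h * g i) = h}

/-- `γ_i = max {h | h g_i ∈ Ap(S), ord(h g_i) = h and h g_i has a unique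
maximal representation}`. -/
noncomputable def gammaN (S : Set ℕ) (m : ℕ) {ν : ℕ} (g : Fin ν → ℕ) (i : Fin ν) : ℕ :=
  sSup {h : ℕ | InApery S m (h * g i) ∧ ordS S (h * g i) = h ∧ UniqueMaxRep S g (h * g i)}

/-- `B = {Σ_{i≥2} λ_i g_i : 0 ≤ λ_i ≤ β_i}`. -/
def Bset (S : Set ℕ) (m : ℕ) {ν : ℕ} [NeZero ν] (g : Fin ν → ℕ) : Set ℕ :=
  {s | ∃ lam : Fin ν → ℕ, lam 0 = 0 ∧ (∀ i, lam i ≤ betaN S m g i) ∧ ∑ i, lam i * g i = s}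

/-- `Γ = {Σ_{i≥2} λ_i g_i : 0 ≤ λ_i ≤ γ_i}`. -/
def GammaSet (S : Set ℕ) (m : ℕ) {ν : ℕ} [NeZero ν] (g : Fin ν → ℕ) : Set ℕ :=
  {s | ∃ lam : Fin ν → ℕ, lam 0 = 0 ∧ (∀ i, lam i ≤ gammaN S m g i) ∧ ∑ i, lam i * g i = s}


lemma ordSet_bdd (S : Set ℕ) (s : ℕ) :
    BddAbove {h : ℕ | ∃ f : Fin h → ℕ, (∀ j, f j ∈ S ∧ f j ≠ 0) ∧ ∑ j, f j = s} := by
  refine ⟨s, fun h hh => ?_⟩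
  obtain ⟨f, hf, hfs⟩ := hh
  calc h = ∑ _j : Fin h, 1 := by simp
    _ ≤ ∑ j, f j := Finset.sum_le_sum fun j _ => Nat.one_le_iff_ne_zero.2 (hf j).2
    _ = s := hfs

lemma ordSet_add {S : Set ℕ} {s t a b : ℕ}
    (ha : ∃ f : Fin a → ℕ, (∀ j, f j ∈ S ∧ f j ≠ 0) ∧ ∑ j, f j = s)
    (hb : ∃ f : Fin b → ℕ, (∀ j, f j ∈ S ∧ f j ≠ 0) ∧ ∑ j, f j = t) :
    ∃ f : Fin (a + b) → ℕ, (∀ j, f j ∈ S ∧ f j ≠ 0) ∧ ∑ j, f j = s + t := by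
  obtain ⟨f, hf, hfs⟩ := ha
  obtain ⟨g, hg, hgs⟩ := hb
  refine ⟨Fin.append f g, fun j => ?_, ?_⟩
  · refine Fin.addCases (fun j => ?_) (fun j => ?_) j
    · simpa using hf j
    · simpa using hg j
  · rw [Fin.sum_univ_add]
    simp [hfs, hgs]

lemma ordSet_const {S : Set ℕ} {x : ℕ} (hx : x ∈ S) (hx0 : x ≠ 0) (k : ℕ) :
    ∃ f : Fin k → ℕ, (∀ j, f j ∈ S ∧ f j ≠ 0) ∧ ∑ j, f j = k * x :=
  ⟨fun _ => x, fun _ => ⟨hx, hx0⟩, by simp [Finset.sum_const, mul_comm]⟩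

lemma ordSet_sum {S : Set ℕ} {ν : ℕ} (g : Fin ν → ℕ) (lam : Fin ν → ℕ)
    (hg : ∀ j, g j ∈ S ∧ g j ≠ 0) (t : Finset (Fin ν)) :
    ∃ f : Fin (∑ j ∈ t, lam j) → ℕ, (∀ j, f j ∈ S ∧ f j ≠ 0) ∧
      ∑ j, f j = ∑ j ∈ t, lam j * g j := by
  classical
  induction t using Finset.induction with
  | empty => exact ⟨Fin.elim0, fun j => j.elim0, by simp⟩
  | insert _ _ hx ih =>
    rw [Finset.sum_insert hx, Finset.sum_insert hx]
    exact ordSet_add (ordSet_const (hg _).1 (hg _).2 _) ih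

/-- `s ⪯_M t`. -/
def predM (S : Set ℕ) (s t : ℕ) : Prop :=
  ∃ u ∈ S, s + u = t ∧ ordS S s + ordS S u = ordS S t

theorem maxrep_coeff_le_beta (S : Set ℕ) {ν : ℕ} [NeZero ν] (g : Fin ν → ℕ) (hν : 2 ≤ ν)
    (hS : IsNumSgp S) (hgen : MinimalGen S g) (hmono : StrictMono g)
    (hmpos : 0 < g 0) (hmul : ∀ s ∈ S, s ≠ 0 → g 0 ≤ s)
    (ω : ℕ) (hω : InApery S (g 0) ω) (lam : Fin ν → ℕ) (hlam0 : lam 0 = 0)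
    (hrep : ∑ i, lam i * g i = ω) (hmaxrep : ∑ i, lam i = ordS S ω) :
    ∀ i : Fin ν, lam i ≤ betaN S (g 0) g i := by
  classical
  intro i
  obtain ⟨hgen1, _⟩ := hgen
  obtain ⟨_, hadd, hfin⟩ := hS
  set m := g 0 with hm
  -- all generators are in S and nonzero
  have hgS : ∀ j, g j ∈ S ∧ g j ≠ 0 := by
    intro j
    constructor
    · refine (hgen1 (g j)).2 ⟨Pi.single j 1, ?_⟩
      rw [Finset.sum_eq_single j]
      · simp
      · intro b _ hb; simp [Pi.single_apply, hb]
      · simp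
    · have h0j : (0 : Fin ν) ≤ j := by simp [Fin.le_def]
      have : 0 < g j := lt_of_lt_of_le hmpos (hmono.monotone h0j)
      omega
  -- decomposition ω = lam i * g i + r
  set r : ℕ := ∑ j ∈ Finset.univ.erase i, lam j * g j with hr
  have hdecomp : lam i * g i + r = ω := by
    rw [hr, Finset.add_sum_erase Finset.univ (fun j => lam j * g j) (Finset.mem_univ i), hrep]
  have htS : lam i * g i ∈ S := by
    refine (hgen1 _).2 ⟨Pi.single i (lam i), ?_⟩
    rw [Finset.sum_eq_single i]
    · simp
    · intro b _ hb; simp [Pi.single_apply, hb]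
    · simp
  have hrS : r ∈ S := by
    refine (hgen1 r).2 ⟨Function.update lam i 0, ?_⟩
    rw [← Finset.add_sum_erase Finset.univ (fun j => Function.update lam i 0 j * g j)
      (Finset.mem_univ i), hr]
    simp only [Function.update_self, zero_mul, zero_add]
    exact Finset.sum_congr rfl fun j hj =>
      by rw [Function.update_of_ne (Finset.mem_erase.1 hj).1]
  -- lam i * g i is in the Apery set
  have hapt : InApery S m (lam i * g i) := by
    refine ⟨htS, fun u hu hum => ?_⟩
    refine hω.2 (u + r) (hadd u hu r hrS) ?_
    omega
  -- ord (lam i * g i) = lam i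
  have h1 : lam i ≤ ordS S (lam i * g i) :=
    le_csSup (ordSet_bdd S _) (ordSet_const (hgS i).1 (hgS i).2 (lam i))
  have hne : {h : ℕ | ∃ f : Fin h → ℕ, (∀ j, f j ∈ S ∧ f j ≠ 0) ∧
      ∑ j, f j = lam i * g i}.Nonempty :=
    ⟨lam i, ordSet_const (hgS i).1 (hgS i).2 (lam i)⟩
  have hmem : ∃ f : Fin (ordS S (lam i * g i)) → ℕ,
      (∀ j, f j ∈ S ∧ f j ≠ 0) ∧ ∑ j, f j = lam i * g i :=
    Nat.sSup_mem hne (ordSet_bdd S _)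
  have hcomb := ordSet_add hmem (ordSet_sum g lam hgS (Finset.univ.erase i))
  rw [← hr, hdecomp] at hcomb
  have h2 : ordS S (lam i * g i) + ∑ j ∈ Finset.univ.erase i, lam j ≤ ordS S ω :=
    le_csSup (ordSet_bdd S ω) hcomb
  have hsplit : lam i + ∑ j ∈ Finset.univ.erase i, lam j = ordS S ω := by
    rw [Finset.add_sum_erase Finset.univ lam (Finset.mem_univ i), hmaxrep]
  have hord : ordS S (lam i * g i) = lam i := le_antisymm (by omega) h1
  -- bound the beta set
  obtain ⟨N, hN⟩ : BddAbove (Sᶜ : Set ℕ) := hfin.bddAbove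
  have hbdd : BddAbove {h : ℕ | InApery S m (h * g i) ∧ ordS S (h * g i) = h} := by
    refine ⟨N + m, fun h hh => ?_⟩
    have hgi : 1 ≤ g i := Nat.one_le_iff_ne_zero.2 (hgS i).2
    have hle : h ≤ h * g i := Nat.le_mul_of_pos_right h hgi
    rcases lt_or_ge (h * g i) m with hc | hc
    · omega
    · have hnot : h * g i - m ∉ S := fun hmem' =>
        hh.1.2 _ hmem' (Nat.sub_add_cancel hc)
      have := hN hnot
      omega
  exact le_csSup hbdd ⟨hapt, hord⟩
end

section
/- Let ω ∈ Ap(S) and let (μ_2, …, μ_ν) be the lexicographically largest tuple among all maximal representations of ω (representations of ω using only g_2, …, g_ν with Σ μ_i = ord(ω)). Then μ_i ≤ γ_i for each i = 2, …, ν. -/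
open Finset

section AuxLemmas

variable {S : Set ℕ}

/-- The set whose supremum defines `ordS`. -/
def Oset (S : Set ℕ) (s : ℕ) : Set ℕ :=
  {h : ℕ | ∃ f : Fin h → ℕ, (∀ j, f j ∈ S ∧ f j ≠ 0) ∧ ∑ j, f j = s}

lemma ordS_eq_sSup (s : ℕ) : ordS S s = sSup (Oset S s) := rfl

lemma Oset_le {s h : ℕ} (hh : h ∈ Oset S s) : h ≤ s := by
  obtain ⟨f, hf, hsum⟩ := hh
  calc h = ∑ _j : Fin h, 1 := by simp
  _ ≤ ∑ j, f j := Finset.sum_le_sum (fun j _ => Nat.one_le_iff_ne_zero.2 (hf j).2)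
  _ = s := hsum

lemma Oset_bdd (s : ℕ) : BddAbove (Oset S s) := ⟨s, fun _ hh => Oset_le hh⟩

lemma Oset_add {s t h₁ h₂ : ℕ} (h1 : h₁ ∈ Oset S s) (h2 : h₂ ∈ Oset S t) :
    h₁ + h₂ ∈ Oset S (s + t) := by
  obtain ⟨f₁, hf₁, hs₁⟩ := h1
  obtain ⟨f₂, hf₂, hs₂⟩ := h2
  refine ⟨fun k => Sum.elim f₁ f₂ (finSumFinEquiv.symm k), fun j => ?_, ?_⟩
  · rcases hj : finSumFinEquiv.symm j with a | a
    · simp [hj, hf₁ a]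
    · simp [hj, hf₂ a]
  · have := Fintype.sum_equiv finSumFinEquiv
      (fun x : Fin h₁ ⊕ Fin h₂ => Sum.elim f₁ f₂ x)
      (fun k : Fin (h₁ + h₂) => Sum.elim f₁ f₂ (finSumFinEquiv.symm k))
      (fun x => by simp)
    rw [← this, Fintype.sum_sum_type]
    simp only [Sum.elim_inl, Sum.elim_inr]
    omega

lemma Oset_mul {a : ℕ} (ha : a ∈ S) (ha0 : a ≠ 0) : ∀ n : ℕ, n ∈ Oset S (n * a) := by
  intro n
  induction n with
  | zero => exact ⟨fun j => j.elim0, fun j => j.elim0, by simp⟩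
  | succ n ih =>
    have h1 : (1 : ℕ) ∈ Oset S a := ⟨fun _ => a, fun _ => ⟨ha, ha0⟩, by simp⟩
    have := Oset_add ih h1
    simpa [Nat.succ_mul] using this

lemma Oset_rep {ν : ℕ} (g : Fin ν → ℕ) (hgS : ∀ j, g j ∈ S) (hg0 : ∀ j, g j ≠ 0)
    (lam : Fin ν → ℕ) : (∑ i, lam i) ∈ Oset S (∑ i, lam i * g i) := by
  classical
  have H : ∀ T : Finset (Fin ν), (∑ i ∈ T, lam i) ∈ Oset S (∑ i ∈ T, lam i * g i) := by
    intro T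
    induction T using Finset.induction_on with
    | empty => exact ⟨fun j => j.elim0, fun j => j.elim0, by simp⟩
    | insert _ _ hnotmem ih =>
      rw [Finset.sum_insert hnotmem, Finset.sum_insert hnotmem]
      exact Oset_add (Oset_mul (hgS _) (hg0 _) _) ih
  exact H Finset.univ

lemma le_ordS {s h : ℕ} (hh : h ∈ Oset S s) : h ≤ ordS S s := le_csSup (Oset_bdd s) hh

lemma ordS_mem {s : ℕ} (hs : s ∈ S) : ordS S s ∈ Oset S s := by
  apply Nat.sSup_mem ?_ (Oset_bdd s)
  rcases eq_or_ne s 0 with rfl | h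
  · exact ⟨0, fun j => j.elim0, fun j => j.elim0, by simp⟩
  · exact ⟨1, fun _ => s, fun _ => ⟨hs, h⟩, by simp⟩

lemma ordS_superadd {s t : ℕ} (hs : s ∈ S) (ht : t ∈ S) :
    ordS S s + ordS S t ≤ ordS S (s + t) :=
  le_ordS (Oset_add (ordS_mem hs) (ordS_mem ht))

lemma sum_update_mul {ν : ℕ} (mu g : Fin ν → ℕ) (i : Fin ν) (b : ℕ) :
    ∑ j, Function.update mu i b j * g j + mu i * g i = ∑ j, mu j * g j + b * g i := by
  classical
  have hfun : (fun j => Function.update mu i b j * g j)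
      = Function.update (fun j => mu j * g j) i (b * g i) := by
    funext j
    by_cases h : j = i
    · subst h; simp
    · simp [Function.update_apply, h]
  have h1 : ∑ j, Function.update mu i b j * g j
      = b * g i + ∑ j ∈ Finset.univ.erase i, mu j * g j := by
    rw [hfun, Finset.sum_update_of_mem (Finset.mem_univ i)]
    rw [Finset.sdiff_singleton_eq_erase]
  have h2 : ∑ j, mu j * g j = mu i * g i + ∑ j ∈ Finset.univ.erase i, mu j * g j :=
    (Finset.add_sum_erase _ _ (Finset.mem_univ i)).symm
  omega

lemma sum_update_add {ν : ℕ} (mu : Fin ν → ℕ) (i : Fin ν) (b : ℕ) :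
    ∑ j, Function.update mu i b j + mu i = ∑ j, mu j + b := by
  have := sum_update_mul mu (fun _ => 1) i b
  simpa using this

lemma mem_S_of_rep {ν : ℕ} {g : Fin ν → ℕ} (hgen : Generates S g) (lam : Fin ν → ℕ) :
    ∑ i, lam i * g i ∈ S := (hgen _).2 ⟨lam, rfl⟩

lemma exists_bound (hfin : (Sᶜ : Set ℕ).Finite) : ∃ N : ℕ, ∀ n, N ≤ n → n ∈ S := by
  obtain ⟨N, hN⟩ := hfin.bddAbove
  refine ⟨N + 1, fun n hn => ?_⟩
  by_contra h
  have := hN (Set.mem_compl h)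
  omega

end AuxLemmas

theorem lexmax_maxrep_coeff_le_gamma (S : Set ℕ) {ν : ℕ} [NeZero ν] (g : Fin ν → ℕ) (hν : 2 ≤ ν)
    (hS : IsNumSgp S) (hgen : MinimalGen S g) (hmono : StrictMono g)
    (hmpos : 0 < g 0) (hmul : ∀ s ∈ S, s ≠ 0 → g 0 ≤ s)
    (ω : ℕ) (hω : InApery S (g 0) ω) (mu : Fin ν → ℕ) (hmu0 : mu 0 = 0)
    (hmu : IsMaxRep S g mu ω)
    (hlex : ∀ lam : Fin ν → ℕ, lam 0 = 0 → IsMaxRep S g lam ω → lam ≠ mu →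
      ∃ k : Fin ν, lam k < mu k ∧ ∀ j : Fin ν, j < k → lam j = mu j) :
    ∀ i : Fin ν, mu i ≤ gammaN S (g 0) g i := by
  classical
  intro i
  rcases eq_or_ne i 0 with rfl | hi0
  · simp [hmu0]
  obtain ⟨hgen', _hmin⟩ := hgen
  have hgS : ∀ j, g j ∈ S := by
    intro j
    refine (hgen' (g j)).2 ⟨fun k => if k = j then 1 else 0, ?_⟩
    simp [ite_mul, Finset.sum_ite_eq']
  have hgpos : ∀ j, 0 < g j := fun j => hmpos.trans_le (hmono.monotone (Fin.zero_le j))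
  have hg0 : ∀ j, g j ≠ 0 := fun j => (hgpos j).ne'
  -- the candidate element
  set a := mu i * g i with ha
  set δ : Fin ν → ℕ := fun j => if j = i then mu i else 0 with hδ
  have hδrep : ∑ j, δ j * g j = a := by simp [hδ, ite_mul, Finset.sum_ite_eq', ha]
  have hδsum : ∑ j, δ j = mu i := by simp [hδ, Finset.sum_ite_eq']
  have haS : a ∈ S := by rw [← hδrep]; exact mem_S_of_rep hgen' δ
  -- the rest of ω
  set rest := ∑ j, Function.update mu i 0 j * g j with hrest_def
  have hrestS : rest ∈ S := mem_S_of_rep hgen' _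
  have hrest : rest + a = ω := by
    have := sum_update_mul mu g i 0
    rw [hmu.1] at this
    simpa [hrest_def, ha] using this
  -- a is in the Apéry set
  have haAp : InApery S (g 0) a := by
    refine ⟨haS, fun u hu hua => ?_⟩
    exact hω.2 (u + rest) (hS.2.1 u hu rest hrestS) (by omega)
  -- ord a = mu i
  have hordrest : ∑ j, Function.update mu i 0 j ≤ ordS S rest := le_ordS (Oset_rep g hgS hg0 _)
  have hupd_sum : ∑ j, Function.update mu i 0 j + mu i = ∑ j, mu j := by
    have := sum_update_add mu i 0
    omega
  have horda : ordS S a = mu i := by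
    have h1 : mu i ≤ ordS S a := le_ordS (Oset_mul (hgS i) (hg0 i) (mu i))
    have h3 : ordS S a + ordS S rest ≤ ordS S ω := by
      have := ordS_superadd haS hrestS
      rwa [show a + rest = ω by omega] at this
    have h4 : ordS S ω = ∑ j, mu j := hmu.2.symm
    omega
  -- unique maximal representation
  have huniq : UniqueMaxRep S g a := by
    refine ⟨δ, ⟨hδrep, by rw [horda, hδsum]⟩, ?_⟩
    rintro lam ⟨hre, hsum⟩
    rw [horda] at hsum
    -- lam 0 = 0
    have hlam0 : lam 0 = 0 := by
      by_contra h0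
      obtain ⟨c, hc⟩ : ∃ c, lam 0 = c + 1 := ⟨lam 0 - 1, by omega⟩
      have hkey := sum_update_mul lam g 0 c
      rw [hre, hc, add_mul, one_mul] at hkey
      refine haAp.2 (∑ j, Function.update lam 0 c j * g j)
        (mem_S_of_rep hgen' _) (by omega)
    set lam' : Fin ν → ℕ := fun j => lam j + Function.update mu i 0 j with hlam'
    have hlam'0 : lam' 0 = 0 := by
      simp only [hlam', hlam0, Function.update_apply, hmu0, zero_add]
      split <;> rfl
    have hlam'rep : ∑ j, lam' j * g j = ω := by
      have hsplit : ∑ j, lam' j * g j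
          = ∑ j, lam j * g j + ∑ j, Function.update mu i 0 j * g j := by
        rw [← Finset.sum_add_distrib]
        exact Finset.sum_congr rfl (fun j _ => by rw [hlam']; ring)
      rw [hsplit, hre]
      omega
    have hlam'sum : ∑ j, lam' j = ordS S ω := by
      have hsplit : ∑ j, lam' j = ∑ j, lam j + ∑ j, Function.update mu i 0 j :=
        Finset.sum_add_distrib
      rw [hsplit, hsum, ← hmu.2]
      omega
    by_cases hcase : lam' = mu
    · funext j
      have hj := congrFun hcase j
      simp only [hlam', Function.update_apply] at hj
      by_cases h : j = i
      · subst h; simp at hj; simp [hδ]; omega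
      · simp [h] at hj; simp [hδ, h]; omega
    · obtain ⟨k, hk1, hk2⟩ := hlex lam' hlam'0 ⟨hlam'rep, hlam'sum⟩ hcase
      exfalso
      have hki : k = i := by
        by_contra hne
        have : mu k ≤ lam' k := by
          simp only [hlam', Function.update_apply, if_neg hne]
          omega
        omega
      subst hki
      have hlti : lam k < mu k := by
        simp only [hlam', Function.update_apply, if_pos rfl] at hk1
        omega
      have hjz : ∀ j, j < k → lam j = 0 := by
        intro j hj
        have h2 := hk2 j hj
        simp only [hlam', Function.update_apply, if_neg hj.ne] at h2
        omega
      -- pointwise bound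
      have hpt : ∀ j : Fin ν, lam j * g k + (if k < j then lam j else 0) ≤ lam j * g j := by
        intro j
        rcases lt_trichotomy j k with h | h | h
        · simp [hjz j h]
        · subst h; simp
        · have hgk : g k + 1 ≤ g j := hmono h
          have := Nat.mul_le_mul_left (lam j) hgk
          rw [mul_add, mul_one] at this
          simpa [h] using this
      have hsumpt := Finset.sum_le_sum (fun j (_ : j ∈ Finset.univ) => hpt j)
      rw [Finset.sum_add_distrib, ← Finset.sum_mul, hsum, hre, ha] at hsumpt
      have hite : ∑ j, (if k < j then lam j else 0) = 0 := by omega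
      have hz : ∀ j, k < j → lam j = 0 := by
        intro j hj
        have := (Finset.sum_eq_zero_iff.1 hite) j (Finset.mem_univ j)
        simpa [hj] using this
      have hsingle : ∑ j, lam j = lam k := by
        refine Finset.sum_eq_single k (fun j _ hne => ?_) (fun h => absurd (Finset.mem_univ k) h)
        rcases lt_or_gt_of_ne hne with h | h
        · exact hjz j h
        · exact hz j h
      omega
  -- conclude via le_csSup
  obtain ⟨N, hN⟩ := exists_bound hS.2.2
  have hApBound : ∀ s : ℕ, InApery S (g 0) s → s < N + g 0 := by
    intro s hs
    by_contra hge
    push_neg at hge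
    exact hs.2 (s - g 0) (hN _ (by omega)) (by omega)
  have hbdd : BddAbove {h : ℕ | InApery S (g 0) (h * g i) ∧ ordS S (h * g i) = h ∧
      UniqueMaxRep S g (h * g i)} := by
    refine ⟨N + g 0, fun h hh => ?_⟩
    have h1 := hApBound _ hh.1
    have h2 : h ≤ h * g i := Nat.le_mul_of_pos_right h (hgpos i)
    omega
  exact le_csSup hbdd ⟨haAp, horda, huniq⟩
end

section
/- Every element of the Apéry set of S belongs to Γ, where Γ = {Σ_{i=2}^ν λ_i g_i : 0 ≤ λ_i ≤ γ_i}. In other words, Ap(S) ⊆ Γ. -/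
open Finset

def Pnice (S : Set ℕ) (h s : ℕ) : Prop :=
  ∃ f : Fin h → ℕ, (∀ j, f j ∈ S ∧ f j ≠ 0) ∧ ∑ j, f j = s

lemma Pnice_add {S : Set ℕ} {h1 s1 h2 s2 : ℕ} (p1 : Pnice S h1 s1) (p2 : Pnice S h2 s2) :
    Pnice S (h1 + h2) (s1 + s2) := by
  obtain ⟨f1, hf1, hs1⟩ := p1
  obtain ⟨f2, hf2, hs2⟩ := p2
  refine ⟨Fin.append f1 f2, ?_, ?_⟩
  · intro j
    refine Fin.addCases (fun i => ?_) (fun i => ?_) j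
    · rw [Fin.append_left]; exact hf1 i
    · rw [Fin.append_right]; exact hf2 i
  · rw [Fin.sum_univ_add]
    simp [Fin.append_left, Fin.append_right, hs1, hs2]

lemma Pnice_mul {S : Set ℕ} {x : ℕ} (hx : x ∈ S) (hxne : x ≠ 0) (c : ℕ) :
    Pnice S c (c * x) := by
  induction c with
  | zero =>
      refine ⟨Fin.elim0, fun j => j.elim0, ?_⟩
      simp
  | succ c ih =>
      have := Pnice_add ih (show Pnice S 1 x from ⟨fun _ => x, fun _ => ⟨hx, hxne⟩, by simp⟩)
      simpa [Nat.succ_mul] using this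

lemma Pnice_rep {S : Set ℕ} {ν : ℕ} {g : Fin ν → ℕ} (hg : ∀ i, g i ∈ S ∧ g i ≠ 0)
    (lam : Fin ν → ℕ) : Pnice S (∑ i, lam i) (∑ i, lam i * g i) := by
  classical
  suffices h : ∀ t : Finset (Fin ν), Pnice S (∑ i ∈ t, lam i) (∑ i ∈ t, lam i * g i) from h univ
  intro t
  induction t using Finset.induction_on with
  | empty =>
      refine ⟨Fin.elim0, fun j => j.elim0, ?_⟩
      simp
  | insert a t ha ih =>
      rw [Finset.sum_insert ha, Finset.sum_insert ha]
      exact Pnice_add (Pnice_mul (hg _).1 (hg _).2 _) ih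

def repSums {ν : ℕ} (g : Fin ν → ℕ) (s : ℕ) : Set ℕ :=
  {h | ∃ lam : Fin ν → ℕ, (∑ i, lam i * g i) = s ∧ (∑ i, lam i) = h}

lemma repSums_bdd {ν : ℕ} {g : Fin ν → ℕ} (hg : ∀ i, 0 < g i) (s : ℕ) :
    BddAbove (repSums g s) := by
  refine ⟨s, fun h hh => ?_⟩
  obtain ⟨lam, h1, h2⟩ := hh
  calc h = ∑ i, lam i := h2.symm
    _ ≤ ∑ i, lam i * g i := Finset.sum_le_sum fun i _ => Nat.le_mul_of_pos_right _ (hg i)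
    _ = s := h1

lemma Pnice_bdd (S : Set ℕ) (s : ℕ) : BddAbove {h | Pnice S h s} := by
  refine ⟨s, fun h hh => ?_⟩
  obtain ⟨f, hf, hsum⟩ := hh
  calc h = ∑ _j : Fin h, 1 := by simp
    _ ≤ ∑ j, f j := Finset.sum_le_sum fun j _ => Nat.one_le_iff_ne_zero.mpr (hf j).2
    _ = s := hsum

lemma ordS_eq_repSums {S : Set ℕ} {ν : ℕ} {g : Fin ν → ℕ} (hgen : Generates S g)
    (hg : ∀ i, g i ∈ S ∧ g i ≠ 0) {s : ℕ} (hs : s ∈ S) :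
    ordS S s = sSup (repSums g s) := by
  obtain ⟨lam0, hlam0⟩ := (hgen s).mp hs
  have hrepne : (repSums g s).Nonempty := ⟨∑ i, lam0 i, lam0, hlam0, rfl⟩
  have hPne : {h | Pnice S h s}.Nonempty :=
    ⟨∑ i, lam0 i, hlam0 ▸ Pnice_rep hg lam0⟩
  have hgpos : ∀ i, 0 < g i := fun i => Nat.pos_of_ne_zero (hg i).2
  apply le_antisymm
  · apply csSup_le hPne
    intro h hh
    obtain ⟨f, hf, hsum⟩ := hh
    choose L hL using fun j => (hgen (f j)).mp (hf j).1
    have hmem : (∑ j, ∑ i, L j i) ∈ repSums g s := by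
      refine ⟨fun i => ∑ j, L j i, ?_, ?_⟩
      · calc (∑ i, (∑ j, L j i) * g i) = ∑ i, ∑ j, L j i * g i := by
              refine Finset.sum_congr rfl fun i _ => ?_
              rw [Finset.sum_mul]
          _ = ∑ j, ∑ i, L j i * g i := Finset.sum_comm
          _ = ∑ j, f j := Finset.sum_congr rfl fun j _ => hL j
          _ = s := hsum
      · exact Finset.sum_comm
    have hle1 : h ≤ ∑ j, ∑ i, L j i := by
      calc h = ∑ _j : Fin h, 1 := by simp
        _ ≤ ∑ j, ∑ i, L j i := by
            refine Finset.sum_le_sum fun j _ => ?_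
            rw [Nat.one_le_iff_ne_zero]
            intro h0
            have : ∀ i, L j i = 0 := by
              intro i
              exact (Finset.sum_eq_zero_iff.mp h0) i (Finset.mem_univ i)
            have : f j = 0 := by
              rw [← hL j]
              exact Finset.sum_eq_zero fun i _ => by rw [this i, zero_mul]
            exact (hf j).2 this
    exact hle1.trans (le_csSup (repSums_bdd hgpos s) hmem)
  · apply csSup_le hrepne
    intro h hh
    obtain ⟨lam, h1, h2⟩ := hh
    exact le_csSup (Pnice_bdd S s) (show Pnice S h s from h2 ▸ h1 ▸ Pnice_rep hg lam)

lemma exists_maxrep {S : Set ℕ} {ν : ℕ} {g : Fin ν → ℕ} (hgen : Generates S g)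
    (hg : ∀ i, g i ∈ S ∧ g i ≠ 0) {s : ℕ} (hs : s ∈ S) :
    ∃ lam : Fin ν → ℕ, (∑ i, lam i * g i) = s ∧ (∑ i, lam i) = ordS S s ∧
      ∀ mu : Fin ν → ℕ, (∑ i, mu i * g i) = s → (∑ i, mu i) = ordS S s →
        (∑ j, mu j * g j ^ 2) ≤ ∑ j, lam j * g j ^ 2 := by
  have hgpos : ∀ i, 0 < g i := fun i => Nat.pos_of_ne_zero (hg i).2
  have hord := ordS_eq_repSums hgen hg hs
  have hmem : ordS S s ∈ repSums g s := by
    rw [hord]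
    exact Nat.sSup_mem (let ⟨l, hl⟩ := (hgen s).mp hs; ⟨∑ i, l i, l, hl, rfl⟩)
      (repSums_bdd hgpos s)
  obtain ⟨lam1, hl1, hl2⟩ := hmem
  set Q : Set ℕ := {q | ∃ lam : Fin ν → ℕ, (∑ i, lam i * g i) = s ∧
      (∑ i, lam i) = ordS S s ∧ (∑ j, lam j * g j ^ 2) = q} with hQ
  have hQne : Q.Nonempty := ⟨∑ j, lam1 j * g j ^ 2, lam1, hl1, hl2, rfl⟩
  have hQbdd : BddAbove Q := by
    refine ⟨s * Finset.univ.sup g, fun q hq => ?_⟩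
    obtain ⟨lam, h1, _, h3⟩ := hq
    calc q = ∑ j, lam j * g j ^ 2 := h3.symm
      _ ≤ ∑ j, lam j * g j * Finset.univ.sup g := by
          refine Finset.sum_le_sum fun j _ => ?_
          rw [pow_two, ← mul_assoc]
          exact Nat.mul_le_mul_left _ (Finset.le_sup (Finset.mem_univ j))
      _ = (∑ j, lam j * g j) * Finset.univ.sup g := by rw [Finset.sum_mul]
      _ = s * Finset.univ.sup g := by rw [h1]
  obtain ⟨lam, h1, h2, h3⟩ := Nat.sSup_mem hQne hQbdd
  refine ⟨lam, h1, h2, fun mu m1 m2 => ?_⟩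
  rw [h3]
  exact le_csSup hQbdd ⟨mu, m1, m2, rfl⟩


lemma sum_ite_single {ν : ℕ} (g : Fin ν → ℕ) (i : Fin ν) (c : ℕ) :
    ∑ j, (if j = i then c else 0) * g j = c * g i := by
  simp [ite_mul]

lemma convexity {ν : ℕ} {g : Fin ν → ℕ} (hinj : Function.Injective g)
    (mu : Fin ν → ℕ) (i : Fin ν) (c : ℕ)
    (h1 : ∑ j, mu j = c) (h2 : ∑ j, mu j * g j = c * g i)
    (hne : mu ≠ fun j => if j = i then c else 0) :
    c * g i ^ 2 < ∑ j, mu j * g j ^ 2 := by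
  have hj0 : ∃ j0, j0 ≠ i ∧ mu j0 ≠ 0 := by
    by_contra hcon
    push_neg at hcon
    apply hne
    funext j
    by_cases hj : j = i
    · subst hj
      have hs : ∑ k, mu k = mu j :=
        Finset.sum_eq_single j (fun k _ hk => hcon k hk) (fun h => absurd (Finset.mem_univ j) h)
      rw [if_pos rfl, ← h1, hs]
    · simp [hj, hcon j hj]
  obtain ⟨j0, hj0i, hj0ne⟩ := hj0
  have e1 : (∑ j, (mu j : ℤ)) = (c : ℤ) := by exact_mod_cast h1
  have e2 : (∑ j, (mu j : ℤ) * (g j : ℤ)) = (c : ℤ) * (g i : ℤ) := by exact_mod_cast h2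
  have key : (∑ j, (mu j : ℤ) * ((g j : ℤ) - (g i : ℤ))^2)
      = (∑ j, (mu j : ℤ) * (g j : ℤ)^2) - (c : ℤ) * (g i : ℤ)^2 := by
    calc (∑ j, (mu j : ℤ) * ((g j:ℤ) - (g i:ℤ))^2)
        = ∑ j, ((mu j:ℤ) * (g j:ℤ)^2 - (2*(g i:ℤ))*((mu j:ℤ)*(g j:ℤ)) + (g i:ℤ)^2*(mu j:ℤ)) :=
          Finset.sum_congr rfl fun j _ => by ring
      _ = (∑ j, (mu j:ℤ)*(g j:ℤ)^2) - (2*(g i:ℤ))*(∑ j, (mu j:ℤ)*(g j:ℤ))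
            + (g i:ℤ)^2*(∑ j, (mu j:ℤ)) := by
          rw [Finset.sum_add_distrib, Finset.sum_sub_distrib, ← Finset.mul_sum, ← Finset.mul_sum]
      _ = _ := by rw [e1, e2]; ring
  have hterm : (1:ℤ) ≤ (mu j0 : ℤ) * ((g j0:ℤ) - (g i:ℤ))^2 := by
    have hmu : (1:ℤ) ≤ (mu j0 : ℤ) := by exact_mod_cast Nat.one_le_iff_ne_zero.mpr hj0ne
    have hgne : ((g j0:ℤ) - (g i:ℤ)) ≠ 0 := by
      intro h
      exact hinj.ne hj0i (by exact_mod_cast sub_eq_zero.mp h)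
    rcases hgne.lt_or_gt with h | h <;> nlinarith
  have pos : (0:ℤ) < ∑ j, (mu j : ℤ) * ((g j : ℤ) - (g i:ℤ))^2 := by
    calc (0:ℤ) < 1 := one_pos
      _ ≤ (mu j0:ℤ) * ((g j0:ℤ) - (g i:ℤ))^2 := hterm
      _ ≤ ∑ j, (mu j : ℤ) * ((g j : ℤ) - (g i:ℤ))^2 :=
          Finset.single_le_sum (f := fun j => (mu j : ℤ) * ((g j : ℤ) - (g i:ℤ))^2)
            (fun j _ => by positivity) (Finset.mem_univ j0)
  rw [key] at pos
  have : (c:ℤ) * (g i:ℤ)^2 < ∑ j, (mu j:ℤ)*(g j:ℤ)^2 := by linarith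
  exact_mod_cast this

lemma sum_update_zero_mul {ν : ℕ} (lam : Fin ν → ℕ) (i : Fin ν) (f : Fin ν → ℕ) :
    ∑ j, Function.update lam i 0 j * f j + lam i * f i = ∑ j, lam j * f j := by
  have h1 : ∀ j : Fin ν, Function.update lam i 0 j * f j
      = (if j = i then 0 else lam j * f j) := by
    intro j
    by_cases h : j = i <;> simp [Function.update_apply, h]
  rw [Finset.sum_congr rfl (fun j _ => h1 j)]
  have h2 : ∑ j, lam j * f j
      = ∑ j, ((if j = i then 0 else lam j * f j) + (if j = i then lam j * f j else 0)) := by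
    refine Finset.sum_congr rfl fun j _ => ?_
    by_cases h : j = i <;> simp [h]
  rw [h2, Finset.sum_add_distrib]
  simp

lemma sum_update_zero {ν : ℕ} (lam : Fin ν → ℕ) (i : Fin ν) :
    ∑ j, Function.update lam i 0 j + lam i = ∑ j, lam j := by
  have := sum_update_zero_mul lam i (fun _ => 1)
  simpa using this

theorem apery_subset_gammaSet (S : Set ℕ) {ν : ℕ} [NeZero ν] (g : Fin ν → ℕ) (hν : 2 ≤ ν)
    (hS : IsNumSgp S) (hgen : MinimalGen S g) (hmono : StrictMono g)
    (hmpos : 0 < g 0) (hmul : ∀ s ∈ S, s ≠ 0 → g 0 ≤ s) :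
    AperySet S (g 0) ⊆ GammaSet S (g 0) g := by
  classical
  obtain ⟨hgen1, _hgen2⟩ := hgen
  obtain ⟨h0S, haddS, hfin⟩ := hS
  have hgS : ∀ i, g i ∈ S ∧ g i ≠ 0 := by
    intro i
    have hpos : 0 < g i := lt_of_lt_of_le hmpos (hmono.monotone (Fin.zero_le i))
    refine ⟨(hgen1 (g i)).mpr ⟨fun j => if j = i then 1 else 0, ?_⟩, Nat.pos_iff_ne_zero.mp hpos⟩
    simpa using sum_ite_single g i 1
  have hgpos : ∀ i, 0 < g i := fun i => Nat.pos_of_ne_zero (hgS i).2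
  have hg0i : ∀ i : Fin ν, g 0 ≤ g i := fun i => hmono.monotone (Fin.zero_le i)
  intro w hw
  obtain ⟨hwS, hwAp⟩ := hw
  obtain ⟨lam, hrep, hordw, hmax⟩ := exists_maxrep hgen1 hgS hwS
  have hsumS : ∀ mu : Fin ν → ℕ, (∑ i, mu i * g i) ∈ S := fun mu => (hgen1 _).mpr ⟨mu, rfl⟩
  -- lam 0 = 0
  have hlam0 : lam 0 = 0 := by
    by_contra h0
    set lam' := Function.update lam 0 (lam 0 - 1) with hl'
    have key : (∑ j, lam' j * g j) + g 0 = w := by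
      have h1 := sum_update_zero_mul lam 0 g
      have h2 := sum_update_zero_mul lam' 0 g
      have e1 : Function.update lam' 0 0 = Function.update lam 0 0 := by
        rw [hl', Function.update_idem]
      have e2 : lam' 0 = lam 0 - 1 := by rw [hl', Function.update_self]
      rw [e1, e2] at h2
      rw [hrep] at h1
      have e3 : (lam 0 - 1) * g 0 + g 0 = lam 0 * g 0 := by
        obtain ⟨k, hk⟩ := Nat.exists_eq_succ_of_ne_zero h0
        rw [hk]
        simp [Nat.succ_sub_one, Nat.succ_mul]
      omega
    exact hwAp _ (hsumS lam') key
  show ∃ lam : Fin ν → ℕ, lam 0 = 0 ∧ (∀ i, lam i ≤ gammaN S (g 0) g i) ∧ ∑ i, lam i * g i = w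
  refine ⟨lam, hlam0, ?_, hrep⟩
  intro i
  have hrt : (∑ j, Function.update lam i 0 j * g j) + lam i * g i = w := by
    rw [sum_update_zero_mul lam i g, hrep]
  have hrS : (∑ j, Function.update lam i 0 j * g j) ∈ S := hsumS _
  have htS : lam i * g i ∈ S := by
    rw [← sum_ite_single g i (lam i)]
    exact hsumS _
  have htAp : InApery S (g 0) (lam i * g i) := by
    refine ⟨htS, fun u hu hut => ?_⟩
    refine hwAp (u + ∑ j, Function.update lam i 0 j * g j)
      (haddS u hu _ hrS) ?_
    omega
  have hwitmem : lam i ∈ repSums g (lam i * g i) :=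
    ⟨fun j => if j = i then lam i else 0, by simpa using sum_ite_single g i (lam i), by simp⟩
  -- the swap estimate
  have hswap : ∀ mu : Fin ν → ℕ, (∑ j, mu j * g j) = lam i * g i →
      (∑ j, (Function.update lam i 0 j + mu j) * g j) = w ∧
      (∑ j, (Function.update lam i 0 j + mu j)) = (∑ j, Function.update lam i 0 j) + ∑ j, mu j := by
    intro mu hmu
    constructor
    · simp only [add_mul]
      rw [Finset.sum_add_distrib, hmu, hrt]
    · rw [Finset.sum_add_distrib]
  -- ord t = lam i
  have hordt : ordS S (lam i * g i) = lam i := by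
    apply le_antisymm
    · have hmem : ordS S (lam i * g i) ∈ repSums g (lam i * g i) := by
        rw [ordS_eq_repSums hgen1 hgS htS]
        exact Nat.sSup_mem ⟨lam i, hwitmem⟩ (repSums_bdd hgpos _)
      obtain ⟨mu, hm1, hm2⟩ := hmem
      obtain ⟨hw', hs'⟩ := hswap mu hm1
      have hle : (∑ j, (Function.update lam i 0 j + mu j)) ≤ ordS S w := by
        rw [ordS_eq_repSums hgen1 hgS hwS]
        exact le_csSup (repSums_bdd hgpos w) ⟨_, hw', rfl⟩
      have e1 := sum_update_zero lam i
      omega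
    · rw [ordS_eq_repSums hgen1 hgS htS]
      exact le_csSup (repSums_bdd hgpos _) hwitmem
  -- unique max rep
  have huniq : UniqueMaxRep S g (lam i * g i) := by
    refine ⟨fun j => if j = i then lam i else 0,
      ⟨by simpa using sum_ite_single g i (lam i), by simp [hordt]⟩, ?_⟩
    rintro mu ⟨hm1, hm2⟩
    by_contra hne
    have hconv := convexity hmono.injective mu i (lam i)
      (by rw [hm2, hordt]) (by rw [hm1]) hne
    obtain ⟨hw', hs'⟩ := hswap mu hm1
    have hs'' : (∑ j, (Function.update lam i 0 j + mu j)) = ordS S w := by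
      have e1 := sum_update_zero lam i
      have e2 : ∑ j, mu j = lam i := by rw [hm2, hordt]
      omega
    have hle := hmax _ hw' hs''
    have hsplit : (∑ j, (Function.update lam i 0 j + mu j) * g j ^ 2)
        = (∑ j, Function.update lam i 0 j * g j ^ 2) + ∑ j, mu j * g j ^ 2 := by
      simp only [add_mul]
      rw [Finset.sum_add_distrib]
    have e3 := sum_update_zero_mul lam i (fun j => g j ^ 2)
    try simp only at e3
    omega
  -- conclude
  show lam i ≤ gammaN S (g 0) g i
  rw [gammaN]
  apply le_csSup
  · obtain ⟨B0, hB0⟩ := hfin.bddAbove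
    refine ⟨B0 + g 0, fun h hh => ?_⟩
    obtain ⟨⟨hhS, hhAp⟩, hhord, _⟩ := hh
    by_cases h0 : h = 0
    · omega
    have hpos : 0 < h := Nat.pos_of_ne_zero h0
    have h1 : g 0 ≤ h * g i := le_trans (hg0i i) (Nat.le_mul_of_pos_left _ hpos)
    have h2 : h * g i - g 0 ∈ Sᶜ := by
      intro hmem
      exact hhAp _ hmem (by omega)
    have h3 : h * g i - g 0 ≤ B0 := hB0 h2
    have h4 : h ≤ h * g i := Nat.le_mul_of_pos_right h (hgpos i)
    omega
  · exact ⟨htAp, hordt, huniq⟩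
end

section
/- If s ⪯_M t (i.e., there exists u ∈ S with s + u = t and ord(s) + ord(u) = ord(t)) and t has a unique maximal representation, then s has a unique maximal representation. -/
open Finset

lemma rep_mem_ordSet {S : Set ℕ} {ν : ℕ} {g : Fin ν → ℕ}
    (hgS : ∀ i, g i ∈ S) (hgpos : ∀ i, 0 < g i) :
    ∀ k (lam : Fin ν → ℕ), ∑ i, lam i = k →
      ∃ f : Fin k → ℕ, (∀ j, f j ∈ S ∧ f j ≠ 0) ∧ ∑ j, f j = ∑ i, lam i * g i := by
  intro k
  induction k with
  | zero =>
    intro lam hl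
    refine ⟨fun j => j.elim0, fun j => j.elim0, ?_⟩
    have h0 : ∀ i ∈ Finset.univ, lam i = 0 := Finset.sum_eq_zero_iff.mp hl
    have hz : ∑ i, lam i * g i = 0 :=
      Finset.sum_eq_zero (fun i hi => by rw [h0 i hi, zero_mul])
    rw [hz]
    simp
  | succ k ih =>
    intro lam hl
    have hex : ∃ i, lam i ≠ 0 := by
      by_contra h
      push_neg at h
      simp [Finset.sum_eq_zero (fun i _ => h i)] at hl
    obtain ⟨i, hi⟩ := hex
    obtain ⟨m, hm⟩ := Nat.exists_eq_succ_of_ne_zero hi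
    set lam' : Fin ν → ℕ := Function.update lam i m with hlam'
    have hsum' : ∑ j, lam' j = k := by
      have h1 : ∑ j, lam j = lam i + ∑ j ∈ Finset.univ.erase i, lam j :=
        (Finset.add_sum_erase _ _ (Finset.mem_univ i)).symm
      have h2 : ∑ j, lam' j = lam' i + ∑ j ∈ Finset.univ.erase i, lam' j :=
        (Finset.add_sum_erase _ _ (Finset.mem_univ i)).symm
      have h3 : ∑ j ∈ Finset.univ.erase i, lam' j = ∑ j ∈ Finset.univ.erase i, lam j :=
        Finset.sum_congr rfl (fun j hj => by
          rw [hlam', Function.update_of_ne (Finset.ne_of_mem_erase hj)])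
      have h4 : lam' i = m := by rw [hlam', Function.update_self]
      omega
    obtain ⟨f, hf, hfs⟩ := ih lam' hsum'
    refine ⟨Fin.cons (g i) f, ?_, ?_⟩
    · intro j
      refine Fin.cases ?_ ?_ j
      · simpa using ⟨hgS i, (hgpos i).ne'⟩
      · intro j'; simpa using hf j'
    · have h1 : ∑ j, lam j * g j = lam i * g i + ∑ j ∈ Finset.univ.erase i, lam j * g j :=
        (Finset.add_sum_erase _ _ (Finset.mem_univ i)).symm
      have h2 : ∑ j, lam' j * g j = lam' i * g i + ∑ j ∈ Finset.univ.erase i, lam' j * g j :=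
        (Finset.add_sum_erase _ _ (Finset.mem_univ i)).symm
      have h3 : ∑ j ∈ Finset.univ.erase i, lam' j * g j
          = ∑ j ∈ Finset.univ.erase i, lam j * g j :=
        Finset.sum_congr rfl (fun j hj => by
          rw [hlam', Function.update_of_ne (Finset.ne_of_mem_erase hj)])
      have h4 : lam' i = m := by rw [hlam', Function.update_self]
      have h5 : ∑ j : Fin (k + 1), (Fin.cons (g i) f : Fin (k+1) → ℕ) j = g i + ∑ j, f j := by
        simp [Fin.sum_univ_succ]
      rw [h5, hfs]
      rw [h1, h2, h3, h4, hm, Nat.succ_eq_add_one]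
      ring

lemma exists_maxRep {S : Set ℕ} {ν : ℕ} {g : Fin ν → ℕ}
    (hgen : Generates S g) (hgpos : ∀ i, 0 < g i)
    {s : ℕ} (hs : s ∈ S) : ∃ lam : Fin ν → ℕ, IsMaxRep S g lam s := by
  classical
  have hgS : ∀ i, g i ∈ S := by
    intro i
    rw [hgen (g i)]
    refine ⟨fun j => if j = i then 1 else 0, ?_⟩
    rw [Finset.sum_eq_single i (fun j _ hj => by simp [hj]) (by simp)]
    simp
  set O : Set ℕ := {h : ℕ | ∃ f : Fin h → ℕ, (∀ j, f j ∈ S ∧ f j ≠ 0) ∧ ∑ j, f j = s}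
    with hO
  obtain ⟨lam0, hlam0⟩ := (hgen s).mp hs
  have hne : O.Nonempty := by
    obtain ⟨f, hf1, hf2⟩ := rep_mem_ordSet hgS hgpos (∑ i, lam0 i) lam0 rfl
    exact ⟨∑ i, lam0 i, f, hf1, by rw [hf2, hlam0]⟩
  have hbdd : BddAbove O := by
    refine ⟨s, fun h hh => ?_⟩
    obtain ⟨f, hf1, hf2⟩ := hh
    calc h = ∑ _j : Fin h, 1 := by simp
    _ ≤ ∑ j, f j := Finset.sum_le_sum (fun j _ => Nat.one_le_iff_ne_zero.mpr (hf1 j).2)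
    _ = s := hf2
  have hmem : ordS S s ∈ O := Nat.sSup_mem hne hbdd
  obtain ⟨f, hf1, hf2⟩ := hmem
  choose lamj hlamj using fun j => (hgen (f j)).mp (hf1 j).1
  set Lam : Fin ν → ℕ := fun i => ∑ j, lamj j i with hLam
  have hrep : ∑ i, Lam i * g i = s := by
    calc ∑ i, Lam i * g i = ∑ i, ∑ j, lamj j i * g i := by
          refine Finset.sum_congr rfl (fun i _ => ?_)
          rw [hLam, Finset.sum_mul]
    _ = ∑ j, ∑ i, lamj j i * g i := Finset.sum_comm
    _ = ∑ j, f j := Finset.sum_congr rfl (fun j _ => hlamj j)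
    _ = s := hf2
  have hge : ordS S s ≤ ∑ i, Lam i := by
    calc ordS S s = ∑ _j : Fin (ordS S s), 1 := by simp
    _ ≤ ∑ j, ∑ i, lamj j i := by
        refine Finset.sum_le_sum (fun j _ => ?_)
        by_contra h
        push_neg at h
        have hz : ∀ i, lamj j i = 0 := by
          intro i
          have := Finset.sum_eq_zero_iff.mp (Nat.lt_one_iff.mp h)
          exact this i (Finset.mem_univ i)
        have : f j = 0 := by
          rw [← hlamj j]
          exact Finset.sum_eq_zero (fun i _ => by rw [hz i, zero_mul])
        exact (hf1 j).2 this
    _ = ∑ i, Lam i := Finset.sum_comm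
  have hle : ∑ i, Lam i ≤ ordS S s := by
    obtain ⟨f', hf1', hf2'⟩ := rep_mem_ordSet hgS hgpos (∑ i, Lam i) Lam rfl
    exact le_csSup hbdd ⟨f', hf1', by rw [hf2', hrep]⟩
  exact ⟨Lam, hrep, le_antisymm hle hge⟩

theorem uniqueMaxRep_of_predM (S : Set ℕ) {ν : ℕ} [NeZero ν] (g : Fin ν → ℕ) (hν : 2 ≤ ν)
    (hS : IsNumSgp S) (hgen : MinimalGen S g) (hmono : StrictMono g)
    (hmpos : 0 < g 0) (hmul : ∀ s ∈ S, s ≠ 0 → g 0 ≤ s)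
    (s t : ℕ) (hs : s ∈ S) (ht : t ∈ S) (hst : predM S s t)
    (hunique : UniqueMaxRep S g t) :
    UniqueMaxRep S g s := by
  classical
  have hgpos : ∀ i, 0 < g i := fun i =>
    lt_of_lt_of_le hmpos (hmono.monotone (Fin.zero_le i))
  obtain ⟨u, huS, hsum, hord⟩ := hst
  obtain ⟨lam0, hlam0⟩ := exists_maxRep hgen.1 hgpos hs
  obtain ⟨rho, hrho1, hrho2⟩ := exists_maxRep hgen.1 hgpos huS
  obtain ⟨T, _, hTu⟩ := hunique
  have key : ∀ mu : Fin ν → ℕ, IsMaxRep S g mu s → mu + rho = T := by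
    intro mu hmu
    refine hTu _ ⟨?_, ?_⟩
    · have : ∑ i, (mu i + rho i) * g i = ∑ i, mu i * g i + ∑ i, rho i * g i := by
        rw [← Finset.sum_add_distrib]
        exact Finset.sum_congr rfl (fun i _ => by ring)
      show ∑ i, (mu i + rho i) * g i = t
      rw [this, hmu.1, hrho1, hsum]
    · show ∑ i, (mu i + rho i) = ordS S t
      rw [Finset.sum_add_distrib, hmu.2, hrho2, hord]
  refine ⟨lam0, hlam0, fun mu hmu => ?_⟩
  have h1 := (key mu hmu).trans (key lam0 hlam0).symm
  funext i
  have := congrFun h1 i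
  simpa using this
end

section
/- Suppose S has β-rectangular Apéry set, i.e., Ap(S) = B where B = {Σ_{i=2}^ν λ_i g_i : 0 ≤ λ_i ≤ β_i}. Then every representation ω = Σ_{i=2}^ν λ_i g_i of an element ω ∈ Ap(S) with λ_i ≤ β_i for all i is a maximal representation (Σ λ_i = ord(ω)). -/
open Finset

section BRMAux

def brmRepSet (S : Set ℕ) (s : ℕ) : Set ℕ :=
  {h : ℕ | ∃ f : Fin h → ℕ, (∀ j, f j ∈ S ∧ f j ≠ 0) ∧ ∑ j, f j = s}

lemma brm_ordS_def (S : Set ℕ) (s : ℕ) : ordS S s = sSup (brmRepSet S s) := rfl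

lemma brm_repSet_bddAbove (S : Set ℕ) (s : ℕ) : BddAbove (brmRepSet S s) := by
  refine ⟨s, fun h hh => ?_⟩
  obtain ⟨f, hf, hsum⟩ := hh
  calc h = ∑ _j : Fin h, 1 := by simp
    _ ≤ ∑ j, f j := Finset.sum_le_sum fun j _ => Nat.one_le_iff_ne_zero.2 (hf j).2
    _ = s := hsum

lemma brm_le_ordS {S : Set ℕ} {h s : ℕ} (hh : h ∈ brmRepSet S s) : h ≤ ordS S s :=
  le_csSup (brm_repSet_bddAbove S s) hh

lemma brm_repSet_add {S : Set ℕ} {k l s t : ℕ} (hk : k ∈ brmRepSet S s)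
    (hl : l ∈ brmRepSet S t) : k + l ∈ brmRepSet S (s + t) := by
  obtain ⟨f, hf, hfs⟩ := hk
  obtain ⟨f', hf', hfs'⟩ := hl
  refine ⟨Fin.append f f', fun j => ?_, ?_⟩
  · refine Fin.addCases (fun i => ?_) (fun i => ?_) j
    · rw [Fin.append_left]; exact hf i
    · rw [Fin.append_right]; exact hf' i
  · rw [Fin.sum_univ_add]
    simp [Fin.append_left, Fin.append_right, hfs, hfs']

lemma brm_repSet_zero (S : Set ℕ) : (0 : ℕ) ∈ brmRepSet S 0 :=
  ⟨Fin.elim0, fun j => j.elim0, by simp⟩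

lemma brm_repSet_nsmul {S : Set ℕ} {x : ℕ} (hx : x ∈ S) (hx0 : x ≠ 0) (n : ℕ) :
    n ∈ brmRepSet S (n * x) :=
  ⟨fun _ => x, fun _ => ⟨hx, hx0⟩, by simp [mul_comm]⟩

lemma brm_ordS_zero (S : Set ℕ) : ordS S 0 = 0 :=
  Nat.le_zero.1 (csSup_le ⟨0, brm_repSet_zero S⟩ fun h hh => by
    obtain ⟨f, hf, hsum⟩ := hh
    by_contra hne
    have h1 : 1 ≤ h := by omega
    have := hf ⟨0, h1⟩
    have : f ⟨0, h1⟩ ≤ ∑ j, f j := Finset.single_le_sum (fun j _ => Nat.zero_le _) (Finset.mem_univ _)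
    omega)

variable {S : Set ℕ} {ν : ℕ} {g : Fin ν → ℕ}

lemma brm_gi_mem (hgen : Generates S g) (i : Fin ν) : g i ∈ S := by
  refine (hgen (g i)).2 ⟨Pi.single i 1, ?_⟩
  simp [Pi.single_apply, ite_mul]

lemma brm_flatten (hgS : ∀ i, g i ∈ S) (hg0 : ∀ i, g i ≠ 0) (lam : Fin ν → ℕ) :
    (∑ i, lam i) ∈ brmRepSet S (∑ i, lam i * g i) := by
  classical
  have : ∀ t : Finset (Fin ν), (∑ i ∈ t, lam i) ∈ brmRepSet S (∑ i ∈ t, lam i * g i) := by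
    intro t
    induction t using Finset.induction_on with
    | empty => simpa using brm_repSet_zero S
    | insert _ _ hnot ih =>
      rw [Finset.sum_insert hnot, Finset.sum_insert hnot]
      exact brm_repSet_add (brm_repSet_nsmul (hgS _) (hg0 _) _) ih
  exact this Finset.univ

lemma brm_coeffs_of_rep (hgen : Generates S g) {k s : ℕ} (hk : k ∈ brmRepSet S s) :
    ∃ mu : Fin ν → ℕ, ∑ i, mu i * g i = s ∧ k ≤ ∑ i, mu i := by
  obtain ⟨f, hf, hsum⟩ := hk
  choose c hc using fun j => (hgen (f j)).1 (hf j).1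
  refine ⟨fun i => ∑ j, c j i, ?_, ?_⟩
  · calc ∑ i, (∑ j, c j i) * g i = ∑ i, ∑ j, c j i * g i := by simp [Finset.sum_mul]
      _ = ∑ j, ∑ i, c j i * g i := Finset.sum_comm
      _ = ∑ j, f j := by simp [hc]
      _ = s := hsum
  · calc k = ∑ _j : Fin k, 1 := by simp
      _ ≤ ∑ j, ∑ i, c j i := Finset.sum_le_sum (fun j _ => ?_)
      _ = ∑ i, ∑ j, c j i := Finset.sum_comm
    by_contra hlt
    have hz : ∑ i, c j i = 0 := by omega
    have hz' : ∀ i, c j i = 0 := fun i => Finset.sum_eq_zero_iff.1 hz i (Finset.mem_univ i)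
    have : f j = 0 := by rw [← hc j]; simp [hz']
    exact (hf j).2 this

lemma brm_ordS_mem_repSet (hgen : Generates S g) (hg0 : ∀ i, g i ≠ 0) {s : ℕ} (hs : s ∈ S) :
    ordS S s ∈ brmRepSet S s := by
  obtain ⟨lam, hlam⟩ := (hgen s).1 hs
  rw [brm_ordS_def]
  exact Nat.sSup_mem ⟨∑ i, lam i, hlam ▸ brm_flatten (brm_gi_mem hgen) hg0 lam⟩
    (brm_repSet_bddAbove S s)

lemma brm_exists_maxrep (hgen : Generates S g) (hg0 : ∀ i, g i ≠ 0) {s : ℕ} (hs : s ∈ S) :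
    ∃ mu : Fin ν → ℕ, ∑ i, mu i * g i = s ∧ ∑ i, mu i = ordS S s := by
  obtain ⟨mu, hrep, hge⟩ := brm_coeffs_of_rep hgen (brm_ordS_mem_repSet hgen hg0 hs)
  have hle : ∑ i, mu i ≤ ordS S s := brm_le_ordS (hrep ▸ brm_flatten (brm_gi_mem hgen) hg0 mu)
  exact ⟨mu, hrep, le_antisymm hle hge⟩

lemma brm_apery_le (hS : IsNumSgp S) {m s : ℕ} (h : InApery S m s) :
    s ≤ m + hS.2.2.toFinset.sup id := by
  by_contra hgt
  push_neg at hgt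
  have hu : s - m ∈ S := by
    by_contra hu
    have : s - m ∈ hS.2.2.toFinset := hS.2.2.mem_toFinset.2 hu
    have := Finset.le_sup (f := id) this
    simp only [id] at this
    omega
  exact h.2 _ hu (by omega)

lemma brm_update_sum_mul (mu : Fin ν → ℕ) (i : Fin ν) :
    ∑ j, (Function.update mu i 0) j * g j = ∑ j ∈ Finset.univ.erase i, mu j * g j := by
  classical
  rw [← Finset.add_sum_erase _ (fun j => (Function.update mu i 0) j * g j) (Finset.mem_univ i)]
  rw [Function.update_self, zero_mul, zero_add]
  exact Finset.sum_congr rfl fun j hj => by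
    rw [Function.update_of_ne (Finset.ne_of_mem_erase hj)]

lemma brm_single_sum_mul (n : ℕ) (i : Fin ν) :
    ∑ j, (Pi.single i n : Fin ν → ℕ) j * g j = n * g i := by
  classical
  simp [Pi.single_apply, ite_mul]

section NZ
variable [NeZero ν]

lemma brm_beta_bddAbove (hS : IsNumSgp S) (hmpos : 0 < g 0) (hgpos : ∀ i, 0 < g i) (i : Fin ν) :
    BddAbove {h : ℕ | InApery S (g 0) (h * g i) ∧ ordS S (h * g i) = h} := by
  refine ⟨g 0 + hS.2.2.toFinset.sup id, fun h hh => ?_⟩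
  have h1 : h * g i ≤ g 0 + hS.2.2.toFinset.sup id := brm_apery_le hS hh.1
  have h2 : h ≤ h * g i := Nat.le_mul_of_pos_right h (hgpos i)
  omega

lemma brm_le_betaN (hS : IsNumSgp S) (hmpos : 0 < g 0) (hgpos : ∀ i, 0 < g i) {i : Fin ν} {h : ℕ}
    (h1 : InApery S (g 0) (h * g i)) (h2 : ordS S (h * g i) = h) : h ≤ betaN S (g 0) g i :=
  le_csSup (brm_beta_bddAbove hS hmpos hgpos i) ⟨h1, h2⟩

lemma brm_betaN_zero (hS : IsNumSgp S) (hgen : Generates S g) (hmpos : 0 < g 0) :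
    betaN S (g 0) g 0 = 0 := by
  have hset : {h : ℕ | InApery S (g 0) (h * g 0) ∧ ordS S (h * g 0) = h} = {0} := by
    ext h
    simp only [Set.mem_setOf_eq, Set.mem_singleton_iff]
    constructor
    · rintro ⟨hap, -⟩
      by_contra hne
      have hu : (h - 1) * g 0 ∈ S := by
        refine (hgen _).2 ⟨Pi.single 0 (h - 1), ?_⟩
        simp [Pi.single_apply, ite_mul]
      refine hap.2 _ hu ?_
      have : 1 ≤ h := by omega
      cases h with
      | zero => omega
      | succ n => simp [Nat.succ_sub_one, add_mul, one_mul]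
    · rintro rfl
      constructor
      · constructor
        · simpa using hS.1
        · intro u hu hequ
          simp at hequ
          omega
      · simpa using brm_ordS_zero S
  rw [betaN, hset, csSup_singleton]

lemma brm_maxrep_le_beta (hS : IsNumSgp S) (hgen : Generates S g) (hmpos : 0 < g 0)
    (hgpos : ∀ i, 0 < g i) {w : ℕ} (hw : InApery S (g 0) w) {mu : Fin ν → ℕ}
    (hrep : ∑ i, mu i * g i = w) (hmax : ∑ i, mu i = ordS S w) (i : Fin ν) :
    mu i ≤ betaN S (g 0) g i := by
  classical
  have hg0 : ∀ j, g j ≠ 0 := fun j => (hgpos j).ne'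
  set rest := ∑ j ∈ Finset.univ.erase i, mu j * g j with hrest
  have hsplit : mu i * g i + rest = w := by
    rw [hrest, Finset.add_sum_erase _ (fun j => mu j * g j) (Finset.mem_univ i), hrep]
  have hrestS : rest ∈ S := (hgen rest).2 ⟨Function.update mu i 0, brm_update_sum_mul mu i⟩
  have hmiS : mu i * g i ∈ S := (hgen _).2 ⟨Pi.single i (mu i), brm_single_sum_mul _ i⟩
  have hap : InApery S (g 0) (mu i * g i) := by
    refine ⟨hmiS, fun u hu hequ => ?_⟩
    exact hw.2 (u + rest) (hS.2.1 u hu rest hrestS) (by omega)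
  have hordge : mu i ≤ ordS S (mu i * g i) :=
    brm_le_ordS (brm_repSet_nsmul (brm_gi_mem hgen i) (hg0 i) _)
  have hordle : ordS S (mu i * g i) ≤ mu i := by
    obtain ⟨rho, hrho, hkrho⟩ := brm_coeffs_of_rep hgen (brm_ordS_mem_repSet hgen hg0 hmiS)
    set tau : Fin ν → ℕ := fun j => Function.update mu i 0 j + rho j with htau
    have htsum : ∑ j, tau j * g j = w := by
      have : ∑ j, tau j * g j = ∑ j, (Function.update mu i 0) j * g j + ∑ j, rho j * g j := by
        rw [← Finset.sum_add_distrib]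
        exact Finset.sum_congr rfl fun j _ => by rw [htau]; ring
      rw [this, brm_update_sum_mul mu i, hrho]
      omega
    have h1 : ∑ j, tau j ≤ ordS S w :=
      brm_le_ordS (htsum ▸ brm_flatten (brm_gi_mem hgen) hg0 tau)
    have h2 : ∑ j, tau j = ∑ j ∈ Finset.univ.erase i, mu j + ∑ j, rho j := by
      have e1 : ∑ j, tau j = ∑ j, Function.update mu i 0 j + ∑ j, rho j := by
        rw [htau, Finset.sum_add_distrib]
      have e2 : ∑ j, Function.update mu i 0 j = ∑ j ∈ Finset.univ.erase i, mu j := by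
        rw [← Finset.add_sum_erase _ (Function.update mu i 0) (Finset.mem_univ i),
          Function.update_self, zero_add]
        exact Finset.sum_congr rfl fun j hj => by
          rw [Function.update_of_ne (Finset.ne_of_mem_erase hj)]
      rw [e1, e2]
    have h3 : ∑ j, mu j = mu i + ∑ j ∈ Finset.univ.erase i, mu j := by
      rw [Finset.add_sum_erase _ mu (Finset.mem_univ i)]
    omega
  exact brm_le_betaN hS hmpos hgpos hap (le_antisymm hordle hordge)

lemma brm_corner_case (hS : IsNumSgp S) (hgen : Generates S g) (hmpos : 0 < g 0)
    (hgpos : ∀ i, 0 < g i) {w : ℕ} (hw : InApery S (g 0) w) {lam : Fin ν → ℕ}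
    (hrep : ∑ i, lam i * g i = w) (hall : ∀ i, lam i = betaN S (g 0) g i) :
    ∑ i, lam i = ordS S w := by
  have hg0 : ∀ j, g j ≠ 0 := fun j => (hgpos j).ne'
  have hge : ∑ i, lam i ≤ ordS S w := brm_le_ordS (hrep ▸ brm_flatten (brm_gi_mem hgen) hg0 lam)
  obtain ⟨mu, hmurep, hmumax⟩ := brm_exists_maxrep hgen hg0 hw.1
  have hle : ∀ i, mu i ≤ lam i := fun i =>
    (hall i) ▸ brm_maxrep_le_beta hS hgen hmpos hgpos hw hmurep hmumax i
  have : ∑ i, mu i ≤ ∑ i, lam i := Finset.sum_le_sum fun i _ => hle i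
  omega

lemma brm_main_aux (hS : IsNumSgp S) (hgen : Generates S g) (hmpos : 0 < g 0)
    (hgpos : ∀ i, 0 < g i) (hrect : AperySet S (g 0) = Bset S (g 0) g) :
    ∀ (d w : ℕ) (lam : Fin ν → ℕ), InApery S (g 0) w → lam 0 = 0 →
      (∀ i, lam i ≤ betaN S (g 0) g i) →
      ∑ i, lam i * g i = w → g 0 + hS.2.2.toFinset.sup id - w ≤ d → ∑ i, lam i = ordS S w := by
  have hg0 : ∀ j, g j ≠ 0 := fun j => (hgpos j).ne'
  intro d
  induction d with
  | zero =>
    intro w lam hw hlam0 hle hrep hd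
    by_cases hall : ∀ i, lam i = betaN S (g 0) g i
    · exact brm_corner_case hS hgen hmpos hgpos hw hrep hall
    · exfalso
      push_neg at hall
      obtain ⟨j, hj⟩ := hall
      have hjlt : lam j < betaN S (g 0) g j := lt_of_le_of_ne (hle j) hj
      have hj0 : j ≠ 0 := by
        intro h
        rw [h, hlam0, brm_betaN_zero hS hgen hmpos] at hjlt
        omega
      set lam' := Function.update lam j (lam j + 1) with hlam'
      have hsum' : ∑ i, lam' i * g i = w + g j := by
        rw [hlam', ← Finset.add_sum_erase _ (fun i => Function.update lam j (lam j + 1) i * g i)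
          (Finset.mem_univ j), Function.update_self]
        rw [← hrep, ← Finset.add_sum_erase _ (fun i => lam i * g i) (Finset.mem_univ j)]
        have : ∑ i ∈ Finset.univ.erase j, Function.update lam j (lam j + 1) i * g i
            = ∑ i ∈ Finset.univ.erase j, lam i * g i :=
          Finset.sum_congr rfl fun i hi => by
            rw [Function.update_of_ne (Finset.ne_of_mem_erase hi)]
        rw [this]
        ring
      have hw' : InApery S (g 0) (w + g j) := by
        have : w + g j ∈ Bset S (g 0) g := by
          refine ⟨lam', by rw [hlam', Function.update_of_ne (Ne.symm hj0), hlam0], ?_, hsum'⟩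
          intro i
          rcases eq_or_ne i j with rfl | hij
          · rw [hlam', Function.update_self]; omega
          · rw [hlam', Function.update_of_ne hij]; exact hle i
        rw [← hrect] at this
        exact this
      have b1 := brm_apery_le hS hw
      have b2 := brm_apery_le hS hw'
      have := hgpos j
      omega
  | succ d ih =>
    intro w lam hw hlam0 hle hrep hd
    by_cases hall : ∀ i, lam i = betaN S (g 0) g i
    · exact brm_corner_case hS hgen hmpos hgpos hw hrep hall
    · push_neg at hall
      obtain ⟨j, hj⟩ := hall
      have hjlt : lam j < betaN S (g 0) g j := lt_of_le_of_ne (hle j) hj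
      have hj0 : j ≠ 0 := by
        intro h
        rw [h, hlam0, brm_betaN_zero hS hgen hmpos] at hjlt
        omega
      set lam' := Function.update lam j (lam j + 1) with hlam'
      have hsum' : ∑ i, lam' i * g i = w + g j := by
        rw [hlam', ← Finset.add_sum_erase _ (fun i => Function.update lam j (lam j + 1) i * g i)
          (Finset.mem_univ j), Function.update_self]
        rw [← hrep, ← Finset.add_sum_erase _ (fun i => lam i * g i) (Finset.mem_univ j)]
        have : ∑ i ∈ Finset.univ.erase j, Function.update lam j (lam j + 1) i * g i
            = ∑ i ∈ Finset.univ.erase j, lam i * g i :=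
          Finset.sum_congr rfl fun i hi => by
            rw [Function.update_of_ne (Finset.ne_of_mem_erase hi)]
        rw [this]
        ring
      have hle' : ∀ i, lam' i ≤ betaN S (g 0) g i := by
        intro i
        rcases eq_or_ne i j with rfl | hij
        · rw [hlam', Function.update_self]; omega
        · rw [hlam', Function.update_of_ne hij]; exact hle i
      have hw' : InApery S (g 0) (w + g j) := by
        have : w + g j ∈ Bset S (g 0) g :=
          ⟨lam', by rw [hlam', Function.update_of_ne (Ne.symm hj0), hlam0], hle', hsum'⟩
        rw [← hrect] at this
        exact this
      have b1 := brm_apery_le hS hw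
      have b2 := brm_apery_le hS hw'
      have hgj := hgpos j
      have hd' : g 0 + hS.2.2.toFinset.sup id - (w + g j) ≤ d := by omega
      have hlam'0 : lam' 0 = 0 := by rw [hlam', Function.update_of_ne (Ne.symm hj0), hlam0]
      have hih := ih (w + g j) lam' hw' hlam'0 hle' hsum' hd'
      have hsum'2 : ∑ i, lam' i = ∑ i, lam i + 1 := by
        rw [hlam', ← Finset.add_sum_erase _ (Function.update lam j (lam j + 1))
          (Finset.mem_univ j), Function.update_self]
        rw [← Finset.add_sum_erase _ lam (Finset.mem_univ j)]
        have : ∑ i ∈ Finset.univ.erase j, Function.update lam j (lam j + 1) i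
            = ∑ i ∈ Finset.univ.erase j, lam i :=
          Finset.sum_congr rfl fun i hi => by
            rw [Function.update_of_ne (Finset.ne_of_mem_erase hi)]
        rw [this]
        ring
      have hup : ordS S w + 1 ≤ ordS S (w + g j) := by
        have h1 : ordS S w ∈ brmRepSet S w := brm_ordS_mem_repSet hgen hg0 hw.1
        have h2 : (1 : ℕ) ∈ brmRepSet S (g j) := by
          have := brm_repSet_nsmul (brm_gi_mem hgen j) (hg0 j) 1
          rwa [one_mul] at this
        exact brm_le_ordS (brm_repSet_add h1 h2)
      have hge : ∑ i, lam i ≤ ordS S w :=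
        brm_le_ordS (hrep ▸ brm_flatten (brm_gi_mem hgen) hg0 lam)
      omega

end NZ
end BRMAux

theorem betaRect_rep_is_maximal (S : Set ℕ) {ν : ℕ} [NeZero ν] (g : Fin ν → ℕ) (hν : 2 ≤ ν)
    (hS : IsNumSgp S) (hgen : MinimalGen S g) (hmono : StrictMono g)
    (hmpos : 0 < g 0) (hmul : ∀ s ∈ S, s ≠ 0 → g 0 ≤ s)
    (hrect : AperySet S (g 0) = Bset S (g 0) g)
    (ω : ℕ) (hω : InApery S (g 0) ω) (lam : Fin ν → ℕ) (hlam0 : lam 0 = 0)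
    (hle : ∀ i, lam i ≤ betaN S (g 0) g i) (hrep : ∑ i, lam i * g i = ω) :
    ∑ i, lam i = ordS S ω := by
  have hgpos : ∀ i, 0 < g i := fun i => lt_of_lt_of_le hmpos (hmono.monotone (Fin.zero_le i))
  exact brm_main_aux hS hgen.1 hmpos hgpos hrect (g 0 + hS.2.2.toFinset.sup id) ω lam
    hω hlam0 hle hrep (by omega)
end
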